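/- Let d ≥ 2 be an integer, let α and K be nonzero real numbers with 2 + αK ≠ 0, and let T be real. Suppose f : (λ₀, T) → ℝ satisfies f(λ) > 0, 2·f(λ) + αK ≠ 0, and the implicit relation f(λ) = 1 − 2K(d−1)λ + (αK/2)·log|(2·f(λ) + αK)/(2 + αK)| for all λ ∈ (λ₀, T), and that f(λ) → 0 as λ → T from the left. Then T = 1/(2K(d−1)) + (α/(4(d−1)))·log|αK/(2 + αK)|. -/

import Mathlib

/-- The collapse time of the RG-2 flow constant-curvature solution: if the
implicitly defined conformal factor `f` tends to `0` as `λ → T⁻`, then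
`T = 1/(2K(d−1)) + (α/(4(d−1)))·log|αK/(2 + αK)|` (equation (2.10) of the paper). -/
theorem rg2_constant_curvature_collapse_time
    (d : ℕ) (hd : 2 ≤ d) (α K : ℝ) (hα : α ≠ 0) (hK : K ≠ 0) (hαK : 2 + α * K ≠ 0)
    (lam₀ T : ℝ) (hlt : lam₀ < T) (f : ℝ → ℝ)
    (hpos : ∀ x ∈ Set.Ioo lam₀ T, 0 < f x)
    (hne : ∀ x ∈ Set.Ioo lam₀ T, 2 * f x + α * K ≠ 0)
    (hrel : ∀ x ∈ Set.Ioo lam₀ T,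
      f x = 1 - 2 * K * ((d : ℝ) - 1) * x
        + (α * K / 2) * Real.log (|(2 * f x + α * K) / (2 + α * K)|))
    (hcollapse : Filter.Tendsto f (nhdsWithin T (Set.Ioo lam₀ T)) (nhds 0)) :
    T = 1 / (2 * K * ((d : ℝ) - 1))
      + (α / (4 * ((d : ℝ) - 1))) * Real.log (|α * K / (2 + α * K)|) := by
  have hd1 : (0:ℝ) < (d : ℝ) - 1 := by
    have : (2:ℝ) ≤ (d:ℝ) := by exact_mod_cast hd
    linarith
  have hαK0 : α * K ≠ 0 := mul_ne_zero hα hK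
  have harg : α * K / (2 + α * K) ≠ 0 := div_ne_zero hαK0 hαK
  set L := Real.log (|α * K / (2 + α * K)|) with hL
  -- continuity of the log expression at f = 0
  have hcont : ContinuousAt (fun y : ℝ => Real.log (|(2 * y + α * K) / (2 + α * K)|)) 0 := by
    have h1 : ContinuousAt (fun y : ℝ => |(2 * y + α * K) / (2 + α * K)|) 0 := by
      fun_prop
    have h2 : |(2 * (0:ℝ) + α * K) / (2 + α * K)| ≠ 0 := by
      rw [abs_ne_zero]
      simpa using harg
    exact h1.log h2
  have hlog : Filter.Tendsto (fun x => Real.log (|(2 * f x + α * K) / (2 + α * K)|))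
      (nhdsWithin T (Set.Ioo lam₀ T)) (nhds L) := by
    have := hcont.tendsto.comp hcollapse
    simpa [hL, Function.comp_def] using this
  have hx : Filter.Tendsto (fun x : ℝ => x) (nhdsWithin T (Set.Ioo lam₀ T)) (nhds T) :=
    Filter.tendsto_id.mono_left nhdsWithin_le_nhds
  have hrhs : Filter.Tendsto
      (fun x => 1 - 2 * K * ((d : ℝ) - 1) * x
        + (α * K / 2) * Real.log (|(2 * f x + α * K) / (2 + α * K)|))
      (nhdsWithin T (Set.Ioo lam₀ T))
      (nhds (1 - 2 * K * ((d : ℝ) - 1) * T + (α * K / 2) * L)) := by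
    exact ((tendsto_const_nhds.sub ((tendsto_const_nhds.mul hx))).add
      (tendsto_const_nhds.mul hlog))
  have hftends : Filter.Tendsto f (nhdsWithin T (Set.Ioo lam₀ T))
      (nhds (1 - 2 * K * ((d : ℝ) - 1) * T + (α * K / 2) * L)) := by
    refine hrhs.congr' ?_
    filter_upwards [self_mem_nhdsWithin] with x hx
    exact (hrel x hx).symm
  have hcl : T ∈ closure (Set.Ioo lam₀ T) := by
    rw [closure_Ioo (ne_of_lt hlt)]
    exact ⟨le_of_lt hlt, le_refl T⟩
  haveI : (nhdsWithin T (Set.Ioo lam₀ T)).NeBot :=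
    mem_closure_iff_nhdsWithin_neBot.mp hcl
  have heq : (0:ℝ) = 1 - 2 * K * ((d : ℝ) - 1) * T + (α * K / 2) * L :=
    tendsto_nhds_unique hcollapse hftends
  have hKd : 2 * K * ((d : ℝ) - 1) ≠ 0 := by
    apply mul_ne_zero (mul_ne_zero two_ne_zero hK) (ne_of_gt hd1)
  field_simp
  nlinarith [heq, sq_nonneg K]
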